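/- Fix positive integers t, n, B and positive integers a_1, …, a_n with Σ_{i∈[n]} a_i = tB, and let G be the bin-packing reduction graph for these data. If V_1, …, V_t is a partition of V(G) such that for every j ∈ [t] the induced subgraph G[V_j] is connected and |V_j| = 3B, then each part V_j contains exactly one vertex of W = {w_1, …, w_t}. -/
import Mathlib


/-- Vertex type of the bin-packing reduction graph: the vertices `u i`, the vertices
`w j`, the `a i - 1` pendant vertices attached to `u i`, and the `2B - 1` pendant
vertices attached to `w j`. -/
inductive BPV (t n B : ℕ) (a : Fin n → ℕ) : Type where
  | u (i : Fin n)
  | w (j : Fin t)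
  | p (i : Fin n) (x : Fin (a i - 1))
  | q (j : Fin t) (y : Fin (2 * B - 1))
  deriving DecidableEq, Fintype

/-- Base relation defining the edges of the bin-packing reduction graph:
every `u i` is adjacent to every `w j`, each pendant `p i x` is adjacent only to
`u i`, and each pendant `q j y` is adjacent only to `w j`. -/
def bpRel (t n B : ℕ) (a : Fin n → ℕ) : BPV t n B a → BPV t n B a → Prop
  | .u _, .w _ => True
  | .p i _, .u i' => i = i'
  | .q j _, .w j' => j = j'
  | _, _ => False

/-- The bin-packing reduction graph. -/
def bpGraph (t n B : ℕ) (a : Fin n → ℕ) : SimpleGraph (BPV t n B a) :=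
  SimpleGraph.fromRel (bpRel t n B a)

lemma adj_q {t n B : ℕ} {a : Fin n → ℕ} {j : Fin t} {y : Fin (2*B-1)} {z : BPV t n B a} :
    (bpGraph t n B a).Adj (BPV.q j y) z ↔ z = BPV.w j := by
  cases z <;> simp [bpGraph, bpRel, SimpleGraph.fromRel_adj, eq_comm]

lemma exists_adj_of_connected {V : Type*} {G : SimpleGraph V} {s : Set V}
    (hc : (G.induce s).Connected) {x : V} (hx : x ∈ s)
    (h2 : ∃ y ∈ s, y ≠ x) : ∃ z ∈ s, G.Adj x z := by
  obtain ⟨y, hy, hyx⟩ := h2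
  obtain ⟨w⟩ := hc.preconnected ⟨x, hx⟩ ⟨y, hy⟩
  cases w with
  | nil => exact (hyx rfl).elim
  | @cons _ b _ h p => exact ⟨b.1, b.2, h⟩

/-- If the vertices of the bin-packing reduction graph are partitioned into `t` parts,
each inducing a connected subgraph of exactly `3B` vertices, then each part contains
exactly one of the vertices `w 1, …, w t`. -/
theorem stmt_14 (t n B : ℕ) (ht : 0 < t) (hn : 0 < n) (hB : 0 < B)
    (a : Fin n → ℕ) (ha : ∀ i, 0 < a i) (hsum : ∑ i, a i = t * B)
    (Vpart : Fin t → Finset (BPV t n B a))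
    (hpart : ∀ x : BPV t n B a, ∃! j : Fin t, x ∈ Vpart j)
    (hconn : ∀ j : Fin t,
      ((bpGraph t n B a).induce (Vpart j : Set (BPV t n B a))).Connected)
    (hcard : ∀ j : Fin t, (Vpart j).card = 3 * B) :
    ∀ j : Fin t, ∃! x : BPV t n B a,
      x ∈ Vpart j ∧ ∃ j' : Fin t, x = BPV.w j' := by
  classical
  -- Step 1: any part containing a pendant `q j y` contains `w j`.
  have step1 : ∀ (j k : Fin t) (y : Fin (2*B-1)),
      BPV.q j y ∈ Vpart k → BPV.w j ∈ Vpart k := by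
    intro j k y hq
    have h2 : ∃ z ∈ (Vpart k : Set (BPV t n B a)), z ≠ BPV.q j y := by
      obtain ⟨b, hb, hbne⟩ := Finset.exists_mem_ne
        (by rw [hcard k]; omega) (BPV.q j y)
      exact ⟨b, hb, hbne⟩
    obtain ⟨z, hz, hadj⟩ := exists_adj_of_connected (hconn k) (by exact hq) h2
    rw [adj_q] at hadj
    rw [← hadj]
    exact hz
  -- Step 2: the part of `w j` contains all pendants `q j y`.
  have step2 : ∀ (j k : Fin t) (y : Fin (2*B-1)),
      BPV.w j ∈ Vpart k → BPV.q j y ∈ Vpart k := by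
    intro j k y hw
    obtain ⟨k', hk', _⟩ := hpart (BPV.q j y)
    have hw' := step1 j k' y hk'
    have hkk : k' = k := (hpart (BPV.w j)).unique hw' hw
    exact hkk ▸ hk'
  have hqinj : ∀ jj : Fin t, Function.Injective (BPV.q (t:=t) (n:=n) (B:=B) (a:=a) jj) := by
    intro jj y1 y2 h
    cases h; rfl
  -- Step 3: no part contains two distinct `w`'s.
  have step3 : ∀ (k j j' : Fin t), BPV.w j ∈ Vpart k → BPV.w j' ∈ Vpart k → j = j' := by
    intro k j j' hj hj'
    by_contra hne
    set Qj : Finset (BPV t n B a) := Finset.univ.image (BPV.q j) with hQj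
    set Qj' : Finset (BPV t n B a) := Finset.univ.image (BPV.q j') with hQj'
    have cQj : Qj.card = 2*B-1 := by
      rw [hQj, Finset.card_image_of_injective _ (hqinj j)]; simp
    have cQj' : Qj'.card = 2*B-1 := by
      rw [hQj', Finset.card_image_of_injective _ (hqinj j')]; simp
    have hdisj : Disjoint Qj Qj' := by
      rw [Finset.disjoint_left]
      rintro x hx hx'
      rw [hQj, Finset.mem_image] at hx
      rw [hQj', Finset.mem_image] at hx'
      obtain ⟨y1, -, rfl⟩ := hx
      obtain ⟨y2, -, hy⟩ := hx'
      simp only [BPV.q.injEq] at hy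
      exact hne hy.1.symm
    have hw1 : BPV.w j' ∉ Qj ∪ Qj' := by
      simp [hQj, hQj']
    have hw2 : BPV.w j ∉ insert (BPV.w j') (Qj ∪ Qj') := by
      simp [hQj, hQj', hne]
    set S : Finset (BPV t n B a) := insert (BPV.w j) (insert (BPV.w j') (Qj ∪ Qj')) with hS
    have hScard : S.card = 4 * B := by
      rw [hS, Finset.card_insert_of_notMem hw2, Finset.card_insert_of_notMem hw1,
        Finset.card_union_of_disjoint hdisj, cQj, cQj']
      omega
    have hsub : S ⊆ Vpart k := by
      intro x hx
      rw [hS] at hx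
      simp only [Finset.mem_insert, Finset.mem_union, hQj, hQj', Finset.mem_image,
        Finset.mem_univ, true_and] at hx
      rcases hx with rfl | rfl | ⟨y, rfl⟩ | ⟨y, rfl⟩
      · exact hj
      · exact hj'
      · exact step2 j k y hj
      · exact step2 j' k y hj'
    have := Finset.card_le_card hsub
    rw [hScard, hcard] at this
    omega
  -- Step 4: the map sending each `w j` to its part is injective, hence surjective.
  have hf : ∀ j, BPV.w (a:=a) (n:=n) (B:=B) j ∈ Vpart ((hpart (BPV.w j)).choose) :=
    fun j => (hpart (BPV.w j)).choose_spec.1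
  have finj : Function.Injective (fun j : Fin t => (hpart (BPV.w (a:=a) j)).choose) := by
    intro j j' h
    simp only at h
    exact step3 _ j j' (hf j) (h ▸ hf j')
  have fsurj : Function.Surjective (fun j : Fin t => (hpart (BPV.w (a:=a) j)).choose) :=
    Finite.surjective_of_injective finj
  intro k
  obtain ⟨j0, hj0⟩ := fsurj k
  simp only at hj0
  refine ⟨BPV.w j0, ⟨hj0 ▸ hf j0, j0, rfl⟩, ?_⟩
  rintro x ⟨hx, j1, rfl⟩
  have hj1 : j1 = j0 := step3 k j1 j0 hx (hj0 ▸ hf j0)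
  rw [hj1]
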